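/- arXiv:2512.24889 — 2 statements merged into one kernel-verified Lean document; each statement's English description precedes it below -/
import Mathlib

section
/- Let X_s be a T×N_s and X_c a T×N_c complex matrix whose columns are linearly independent, let y be a complex vector of length T, let γ₁, γ₂, γ₃ and γ₁', γ₂' be nonnegative reals with γ₁ + γ₂ = γ₁' + γ₂' > 0 and γ₂' + γ₃ > 0, and let Û_s(γ₁,γ₂,γ₃) = 2(γ₂+γ₃) · A⁻¹ (I − X_c (X_c* A⁻¹ X_c)⁻¹ X_c* A⁻¹) X_s with A = 2((γ₁+γ₂)·I + γ₃·X_s X_s*). Then the estimated delay–Doppler response ρ̂_s = (Û_s(γ₁,γ₂,γ₃))* y satisfies ρ̂_s = ((γ₂+γ₃)/(γ₂'+γ₃)) · (Û_s(γ₁',γ₂',γ₃))* y; in particular the two estimates are positive real scalar multiples of one another, so the relative amplitudes of their entries coincide. -/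
open Matrix

/-- The matrix `A = 2((γ₁+γ₂)·I + γ₃·X_s X_sᴴ)` from the KKT system. -/
noncomputable def Amat {T Ns : ℕ} (Xs : Matrix (Fin T) (Fin Ns) ℂ) (γ₁ γ₂ γ₃ : ℝ) :
    Matrix (Fin T) (Fin T) ℂ :=
  (2 : ℝ) • ((γ₁ + γ₂) • (1 : Matrix (Fin T) (Fin T) ℂ) + γ₃ • (Xs * Xsᴴ))

/-- The closed-form optimal solution
`Û_s(γ₁,γ₂,γ₃) = 2(γ₂+γ₃)·A⁻¹ (I − X_c (X_cᴴ A⁻¹ X_c)⁻¹ X_cᴴ A⁻¹) X_s`. -/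
noncomputable def Uopt {T Ns Nc : ℕ} (Xs : Matrix (Fin T) (Fin Ns) ℂ)
    (Xc : Matrix (Fin T) (Fin Nc) ℂ) (γ₁ γ₂ γ₃ : ℝ) : Matrix (Fin T) (Fin Ns) ℂ :=
  (2 * (γ₂ + γ₃)) •
    ((Amat Xs γ₁ γ₂ γ₃)⁻¹ *
      ((1 : Matrix (Fin T) (Fin T) ℂ)
        - Xc * (Xcᴴ * (Amat Xs γ₁ γ₂ γ₃)⁻¹ * Xc)⁻¹ * Xcᴴ * (Amat Xs γ₁ γ₂ γ₃)⁻¹) * Xs)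

/-- If `γ₁+γ₂ = γ₁'+γ₂' > 0` and `γ₂'+γ₃ > 0`, the estimated delay–Doppler
response `ρ̂_s = Û_s(γ₁,γ₂,γ₃)ᴴ y` satisfies
`ρ̂_s = ((γ₂+γ₃)/(γ₂'+γ₃)) · Û_s(γ₁',γ₂',γ₃)ᴴ y`, i.e. the two estimates are positive
real scalar multiples of one another. -/
theorem stmt_8 (T Ns Nc : ℕ)
    (Xs : Matrix (Fin T) (Fin Ns) ℂ) (Xc : Matrix (Fin T) (Fin Nc) ℂ)
    (hXc : Function.Injective (fun v : Fin Nc → ℂ => Xc.mulVec v))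
    (y : Fin T → ℂ)
    (γ₁ γ₂ γ₃ γ₁' γ₂' : ℝ)
    (h1 : 0 ≤ γ₁) (h2 : 0 ≤ γ₂) (h3 : 0 ≤ γ₃) (h1' : 0 ≤ γ₁') (h2' : 0 ≤ γ₂')
    (hsum : γ₁ + γ₂ = γ₁' + γ₂') (hpos : 0 < γ₁ + γ₂) (hpos' : 0 < γ₂' + γ₃) :
    (Uopt Xs Xc γ₁ γ₂ γ₃)ᴴ *ᵥ y
      = ((γ₂ + γ₃) / (γ₂' + γ₃)) • ((Uopt Xs Xc γ₁' γ₂' γ₃)ᴴ *ᵥ y) := by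
  have hA : Amat Xs γ₁ γ₂ γ₃ = Amat Xs γ₁' γ₂' γ₃ := by
    unfold Amat; rw [hsum]
  have hU : Uopt Xs Xc γ₁ γ₂ γ₃
      = ((γ₂ + γ₃) / (γ₂' + γ₃)) • Uopt Xs Xc γ₁' γ₂' γ₃ := by
    unfold Uopt
    rw [hA, smul_smul]
    congr 1
    field_simp
  rw [hU, Matrix.conjTranspose_smul, star_trivial, Matrix.smul_mulVec]
end

section
/- Let X_s be a T×N_s complex matrix and γ ∈ (0,1]. Then Û = (γ·I + (1−γ)·X_s X_s*)⁻¹ X_s is the unique minimizer of f(U) = γ‖U − X_s‖_F² + (1−γ)‖X_s* U − I‖_F² over all T×N_s complex matrices U; in particular, when γ = 1 the unique minimizer is Û = X_s, so with no clutter constraints the optimization reproduces the classical cross-ambiguity filter bank. -/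
open Matrix

/-- Squared Frobenius norm of a complex matrix: `‖M‖_F² = Σ_{i,j} |M i j|²`. -/
noncomputable def frobSq {m n : ℕ} (M : Matrix (Fin m) (Fin n) ℂ) : ℝ :=
  ∑ i, ∑ j, ‖M i j‖ ^ 2

namespace Stmt17Aux

/-- Real part of the Frobenius inner product. -/
noncomputable def ip {m n : ℕ} (M N : Matrix (Fin m) (Fin n) ℂ) : ℝ :=
  (Matrix.trace (Mᴴ * N)).re

lemma frobSq_eq_ip {m n : ℕ} (M : Matrix (Fin m) (Fin n) ℂ) : frobSq M = ip M M := by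
  unfold frobSq ip
  rw [Matrix.trace]
  simp only [Matrix.diag_apply, Matrix.mul_apply, Matrix.conjTranspose_apply, Complex.re_sum]
  rw [Finset.sum_comm]
  congr 1; ext i; congr 1; ext j
  simp [Complex.star_def, ← Complex.normSq_eq_conj_mul_self, Complex.normSq_eq_norm_sq,
    ← Complex.ofReal_pow, Complex.ofReal_re]

lemma ip_comm {m n : ℕ} (M N : Matrix (Fin m) (Fin n) ℂ) : ip M N = ip N M := by
  unfold ip
  have : Nᴴ * M = (Mᴴ * N)ᴴ := by simp [Matrix.conjTranspose_mul]
  rw [this, Matrix.trace_conjTranspose]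
  simp [Complex.star_def]

lemma ip_add_right {m n : ℕ} (M N P : Matrix (Fin m) (Fin n) ℂ) :
    ip M (N + P) = ip M N + ip M P := by
  unfold ip
  rw [Matrix.mul_add, Matrix.trace_add, Complex.add_re]

lemma ip_smul_right {m n : ℕ} (r : ℝ) (M N : Matrix (Fin m) (Fin n) ℂ) :
    ip M ((r : ℂ) • N) = r * ip M N := by
  unfold ip
  rw [Matrix.mul_smul, Matrix.trace_smul]
  simp

lemma ip_zero_right {m n : ℕ} (M : Matrix (Fin m) (Fin n) ℂ) : ip M 0 = 0 := by
  unfold ip; simp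

lemma ip_adjoint {m n k : ℕ} (X : Matrix (Fin m) (Fin n) ℂ)
    (D : Matrix (Fin m) (Fin k) ℂ) (C : Matrix (Fin n) (Fin k) ℂ) :
    ip (Xᴴ * D) C = ip D (X * C) := by
  unfold ip
  rw [Matrix.conjTranspose_mul, Matrix.conjTranspose_conjTranspose, Matrix.mul_assoc]

lemma frobSq_add {m n : ℕ} (M N : Matrix (Fin m) (Fin n) ℂ) :
    frobSq (M + N) = frobSq M + frobSq N + 2 * ip M N := by
  rw [frobSq_eq_ip, frobSq_eq_ip, frobSq_eq_ip]
  have h : ip (M + N) (M + N) = ip (M + N) M + ip (M + N) N := ip_add_right _ _ _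
  rw [h, ip_comm (M + N) M, ip_comm (M + N) N, ip_add_right, ip_add_right,
    ip_comm N M]
  ring

lemma frobSq_nonneg {m n : ℕ} (M : Matrix (Fin m) (Fin n) ℂ) : 0 ≤ frobSq M := by
  unfold frobSq
  positivity

lemma frobSq_eq_zero {m n : ℕ} (M : Matrix (Fin m) (Fin n) ℂ) (h : frobSq M = 0) : M = 0 := by
  unfold frobSq at h
  ext i j
  have h1 : ∀ i ∈ Finset.univ, (0:ℝ) ≤ ∑ j, ‖M i j‖ ^ 2 := by
    intro i _; positivity
  have h2 := (Finset.sum_eq_zero_iff_of_nonneg h1).mp h i (Finset.mem_univ i)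
  have h3 : ∀ j ∈ Finset.univ, (0:ℝ) ≤ ‖M i j‖ ^ 2 := by intro j _; positivity
  have h4 := (Finset.sum_eq_zero_iff_of_nonneg h3).mp h2 j (Finset.mem_univ j)
  have : ‖M i j‖ = 0 := by nlinarith [norm_nonneg (M i j)]
  simpa using this

lemma real_smul_eq {m n : ℕ} (r : ℝ) (M : Matrix (Fin m) (Fin n) ℂ) :
    r • M = (r : ℂ) • M := by
  ext i j
  simp [Complex.real_smul]

end Stmt17Aux

open Stmt17Aux in
/-- For `γ ∈ (0,1]`, the matrix `Û = (γ·I + (1−γ)·X_s X_sᴴ)⁻¹ X_s` is the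
unique global minimizer of `f(U) = γ‖U − X_s‖_F² + (1−γ)‖X_sᴴ U − I‖_F²` over all
`T × N_s` complex matrices `U`; in particular when `γ = 1` the unique minimizer is
`Û = X_s`, so with no clutter constraints the optimization reproduces the classical
cross-ambiguity filter bank. -/
theorem stmt_17 (T Ns : ℕ)
    (Xs : Matrix (Fin T) (Fin Ns) ℂ)
    (γ : ℝ) (hγ0 : 0 < γ) (hγ1 : γ ≤ 1)
    (f : Matrix (Fin T) (Fin Ns) ℂ → ℝ)
    (hf : ∀ U, f U = γ * frobSq (U - Xs)
      + (1 - γ) * frobSq (Xsᴴ * U - (1 : Matrix (Fin Ns) (Fin Ns) ℂ)))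
    (Uhat : Matrix (Fin T) (Fin Ns) ℂ)
    (hU : Uhat = (γ • (1 : Matrix (Fin T) (Fin T) ℂ) + (1 - γ) • (Xs * Xsᴴ))⁻¹ * Xs) :
    (∀ U : Matrix (Fin T) (Fin Ns) ℂ, f Uhat ≤ f U) ∧
      (∀ U : Matrix (Fin T) (Fin Ns) ℂ, f U = f Uhat → U = Uhat) ∧
      (γ = 1 → Uhat = Xs) := by
  open ComplexOrder in
  set A : Matrix (Fin T) (Fin T) ℂ :=
    γ • (1 : Matrix (Fin T) (Fin T) ℂ) + (1 - γ) • (Xs * Xsᴴ) with hA_def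
  -- A is positive definite
  have h1 : Matrix.PosDef (γ • (1 : Matrix (Fin T) (Fin T) ℂ)) := by
    have : γ • (1 : Matrix (Fin T) (Fin T) ℂ)
        = Matrix.diagonal (fun _ => (γ : ℂ)) := by
      ext i j
      by_cases h : i = j <;>
        simp [Matrix.one_apply, Matrix.diagonal, h, Complex.real_smul]
    rw [this]
    exact Matrix.PosDef.diagonal fun i => Complex.zero_lt_real.mpr hγ0
  have h2 : Matrix.PosSemidef ((1 - γ) • (Xs * Xsᴴ)) := by
    have hbase := Matrix.posSemidef_self_mul_conjTranspose Xs
    rw [real_smul_eq]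
    constructor
    · rw [Matrix.IsHermitian, Matrix.conjTranspose_smul, hbase.isHermitian.eq,
        Complex.star_def, Complex.conj_ofReal]
    · intro x
      convert smul_nonneg (Complex.zero_le_real.mpr (by linarith : (0:ℝ) ≤ 1 - γ))
        (hbase.2 x) using 1
      simp only [smul_eq_mul, Finsupp.mul_sum, Matrix.smul_apply]
      refine Finsupp.sum_congr fun i _ => Finsupp.sum_congr fun j _ => ?_
      ring
  have hA : A.PosDef := h1.add_posSemidef h2
  have hAdet : IsUnit A.det := (Matrix.isUnit_iff_isUnit_det A).mp hA.isUnit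
  have hAU : A * Uhat = Xs := by
    rw [hU, ← Matrix.mul_assoc, Matrix.mul_nonsing_inv A hAdet, Matrix.one_mul]
  -- key identity
  have key : ∀ U, f U = f Uhat
      + (γ * frobSq (U - Uhat) + (1 - γ) * frobSq (Xsᴴ * (U - Uhat))) := by
    intro U
    set D : Matrix (Fin T) (Fin Ns) ℂ := U - Uhat with hD
    have e1 : U - Xs = D + (Uhat - Xs) := by rw [hD]; abel
    have e2 : Xsᴴ * U - (1 : Matrix (Fin Ns) (Fin Ns) ℂ)
        = Xsᴴ * D + (Xsᴴ * Uhat - 1) := by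
      rw [hD, Matrix.mul_sub]; abel
    have hcross : γ * ip D (Uhat - Xs)
        + (1 - γ) * ip (Xsᴴ * D) (Xsᴴ * Uhat - 1) = 0 := by
      rw [ip_adjoint, ← ip_smul_right, ← ip_smul_right, ← ip_add_right]
      have hAU' : (γ : ℂ) • Uhat + ((1 - γ : ℝ) : ℂ) • (Xs * Xsᴴ * Uhat) = Xs := by
        have h := hAU
        rw [hA_def, real_smul_eq γ, real_smul_eq (1 - γ), Matrix.add_mul,
          Matrix.smul_mul, Matrix.smul_mul, Matrix.one_mul] at h
        exact h
      have hzero : (γ : ℂ) • (Uhat - Xs)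
          + ((1 - γ : ℝ) : ℂ) • (Xs * (Xsᴴ * Uhat - 1)) = 0 := by
        rw [Matrix.mul_sub, Matrix.mul_one, ← Matrix.mul_assoc]
        push_cast at hAU' ⊢
        linear_combination (norm := module) hAU'
      rw [hzero, ip_zero_right]
    rw [hf U, hf Uhat, e1, e2, frobSq_add, frobSq_add]
    linear_combination 2 * hcross
  refine ⟨?_, ?_, ?_⟩
  · intro U
    have := key U
    nlinarith [frobSq_nonneg (U - Uhat), frobSq_nonneg (Xsᴴ * (U - Uhat)),
      mul_nonneg (le_of_lt hγ0) (frobSq_nonneg (U - Uhat)),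
      mul_nonneg (by linarith : (0:ℝ) ≤ 1 - γ) (frobSq_nonneg (Xsᴴ * (U - Uhat)))]
  · intro U hfe
    have hk := key U
    have hz : frobSq (U - Uhat) = 0 := by
      nlinarith [frobSq_nonneg (U - Uhat), frobSq_nonneg (Xsᴴ * (U - Uhat)),
        mul_nonneg (by linarith : (0:ℝ) ≤ 1 - γ) (frobSq_nonneg (Xsᴴ * (U - Uhat)))]
    have := frobSq_eq_zero _ hz
    exact sub_eq_zero.mp this
  · intro hγ
    rw [hU, hA_def, hγ]
    simp
end
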